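/- With the Krein matrix K(z) as defined (for real symmetric R, S with S invertible), a complex number z with Im z ≠ 0 is an eigenvalue of the pencil (R − zS) if and only if det K(z) = 0. -/
import Mathlib


open Matrix

/-- The complexification of a real matrix. -/
def cmplx {n : ℕ} (A : Matrix (Fin n) (Fin n) ℝ) : Matrix (Fin n) (Fin n) ℂ :=
  A.map (fun x => (x : ℂ))

/-- The Gram matrix `(⟨s i, A (s j)⟩)` of a real matrix `A` on the family `s`. -/
def gramR {n k : ℕ} (A : Matrix (Fin n) (Fin n) ℝ) (s : Fin k → Fin n → ℝ) :
    Matrix (Fin k) (Fin k) ℝ :=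
  Matrix.of fun i j => s i ⬝ᵥ A.mulVec (s j)

/-- The matrix `B` whose `j`-th column is `S₊^{-1/2} P R s j = T (P (R (s j)))`, where `T`
plays the role of `S₊^{-1/2}`. -/
def Bmat {n k : ℕ} (T P R : Matrix (Fin n) (Fin n) ℝ) (s : Fin k → Fin n → ℝ) :
    Matrix (Fin n) (Fin k) ℝ :=
  Matrix.of fun i j => (T.mulVec (P.mulVec (R.mulVec (s j)))) i

/-- The Krein matrix `K(z) = R_N - z S_N - B^* (R̃ - z)⁻¹ B`, where `R̃ = T R T` with
`T = S₊^{-1/2}` (so that `R̃ = S₊^{-1/2} P R P S₊^{-1/2}` on `N(S)ᗮ`). -/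
noncomputable def KreinMatrix {n k : ℕ} (R S P T : Matrix (Fin n) (Fin n) ℝ)
    (s : Fin k → Fin n → ℝ) (z : ℂ) : Matrix (Fin k) (Fin k) ℂ :=
  cmplx (gramR R s) - z • cmplx (gramR S s) -
    (cmplx' (Bmat T P R s))ᴴ * ((cmplx (T * R * T)) - z • 1)⁻¹ * cmplx' (Bmat T P R s)
where cmplx' (B : Matrix (Fin n) (Fin k) ℝ) : Matrix (Fin n) (Fin k) ℂ :=
  B.map (fun x => (x : ℂ))

section Aux

def cpx {a b : ℕ} (A : Matrix (Fin a) (Fin b) ℝ) : Matrix (Fin a) (Fin b) ℂ :=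
  A.map (fun x => (x : ℂ))

lemma cpx_mul {a b c : ℕ} (A : Matrix (Fin a) (Fin b) ℝ) (B : Matrix (Fin b) (Fin c) ℝ) :
    cpx (A * B) = cpx A * cpx B := by
  have h : (fun x : ℝ => (x : ℂ)) = ⇑(algebraMap ℝ ℂ) := rfl
  simp only [cpx, h, Matrix.map_mul]

lemma cpx_one {a : ℕ} : cpx (1 : Matrix (Fin a) (Fin a) ℝ) = 1 := by
  have h : (fun x : ℝ => (x : ℂ)) = ⇑(algebraMap ℝ ℂ) := rfl
  simp only [cpx, h]
  exact Matrix.map_one _ (map_zero _) (map_one _)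

lemma cpx_zero {a b : ℕ} : cpx (0 : Matrix (Fin a) (Fin b) ℝ) = 0 := by
  ext i j; simp [cpx]

lemma cpx_transpose {a b : ℕ} (A : Matrix (Fin a) (Fin b) ℝ) : cpx Aᵀ = (cpx A)ᵀ := by
  ext i j; simp [cpx]

lemma cpx_conjTranspose {a b : ℕ} (A : Matrix (Fin a) (Fin b) ℝ) : (cpx A)ᴴ = cpx Aᵀ := by
  ext i j; simp [cpx, conjTranspose_apply, Complex.conj_ofReal]

lemma herm_unit {m : ℕ} (A : Matrix (Fin m) (Fin m) ℝ) (hA : Aᵀ = A) (z : ℂ) (hz : z.im ≠ 0) :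
    IsUnit (cpx A - z • 1).det := by
  rw [isUnit_iff_ne_zero]
  intro hdet
  obtain ⟨v, hv, hveq⟩ := (Matrix.exists_mulVec_eq_zero_iff).mpr hdet
  have hAherm : (cpx A)ᴴ = cpx A := by rw [cpx_conjTranspose, hA]
  have hAv : (cpx A) *ᵥ v = z • v := by
    have h := hveq
    rw [Matrix.sub_mulVec, Matrix.smul_mulVec, Matrix.one_mulVec, sub_eq_zero] at h
    exact h
  set d := star v ⬝ᵥ ((cpx A) *ᵥ v) with hd
  have hd1 : d = z * (star v ⬝ᵥ v) := by
    rw [hd, hAv, dotProduct_smul, smul_eq_mul]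
  have hd2 : star d = d := by
    have h1 : star d = star ((cpx A) *ᵥ v) ⬝ᵥ v := by
      rw [hd, Matrix.star_dotProduct, star_star]
    rw [h1, Matrix.star_mulVec, hAherm, ← Matrix.dotProduct_mulVec, hd]
  have hr : star v ⬝ᵥ v = ((∑ i, Complex.normSq (v i) : ℝ) : ℂ) := by
    push_cast
    simp [dotProduct, Complex.normSq_eq_conj_mul_self]
  have hrpos : 0 < ∑ i, Complex.normSq (v i) := by
    obtain ⟨i, hi⟩ := Function.ne_iff.mp hv
    exact Finset.sum_pos' (fun j _ => Complex.normSq_nonneg _)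
      ⟨i, Finset.mem_univ i, Complex.normSq_pos.mpr hi⟩
  have him : d.im = 0 := Complex.conj_eq_iff_im.mp hd2
  rw [hd1, hr] at him
  simp [Complex.mul_im] at him
  rcases him with h | h
  · exact hz h
  · exact absurd h (ne_of_gt hrpos)
variable {n k : ℕ} (S P T : Matrix (Fin n) (Fin n) ℝ) (s : Fin k → Fin n → ℝ) (μ : Fin k → ℝ)

-- matrix whose columns are the s j
def Vmat (s : Fin k → Fin n → ℝ) : Matrix (Fin n) (Fin k) ℝ := Matrix.of fun i j => s j i

variable {S P T s μ}

lemma hVV (hon : ∀ i j, s i ⬝ᵥ s j = if i = j then (1:ℝ) else 0) :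
    (Vmat s)ᵀ * Vmat s = 1 := by
  ext i j
  simpa [Vmat, Matrix.mul_apply, dotProduct, Matrix.one_apply] using hon i j

lemma hSV (heig : ∀ i, S *ᵥ s i = μ i • s i) :
    S * Vmat s = Vmat s * Matrix.diagonal μ := by
  ext i j
  have h := congrFun (heig j) i
  simp only [Matrix.mulVec, dotProduct, Pi.smul_apply, smul_eq_mul] at h
  rw [Matrix.mul_apply, Matrix.mul_diagonal]
  show (∑ m, S i m * Vmat s m j) = Vmat s i j * μ j
  simp only [Vmat, Matrix.of_apply]
  rw [h, mul_comm]

lemma hPV (hPsym : Pᵀ = P) (hPidem : P * P = P)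
    (hPfix : ∀ x : Fin n → ℝ, P *ᵥ x = x ↔ ∀ i, s i ⬝ᵥ x = 0) :
    P * Vmat s = 0 := by
  have hPs : ∀ j, P *ᵥ (s j) = 0 := by
    intro j
    have h1 : ∀ i, s i ⬝ᵥ (P *ᵥ s j) = 0 := by
      apply (hPfix (P *ᵥ s j)).mp
      rw [Matrix.mulVec_mulVec, hPidem]
    have h2 : (P *ᵥ s j) ⬝ᵥ (P *ᵥ s j) = 0 := by
      have e1 : P *ᵥ s j = s j ᵥ* P := by
        rw [← Matrix.mulVec_transpose, hPsym]
      calc (P *ᵥ s j) ⬝ᵥ (P *ᵥ s j) = (s j ᵥ* P) ⬝ᵥ (P *ᵥ s j) := by rw [← e1]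
        _ = s j ⬝ᵥ (P *ᵥ (P *ᵥ s j)) := by rw [← Matrix.dotProduct_mulVec, Matrix.mulVec_mulVec]
        _ = s j ⬝ᵥ (P *ᵥ s j) := by rw [Matrix.mulVec_mulVec, hPidem]
        _ = 0 := h1 j
    exact dotProduct_self_eq_zero.mp h2
  ext i j
  have := congrFun (hPs j) i
  simpa [Vmat, Matrix.mul_apply, Matrix.mulVec, dotProduct] using this

lemma hsdot (y : Fin n → ℝ) (i : Fin k) : s i ⬝ᵥ y = ((Vmat s)ᵀ *ᵥ y) i := by
  simp [Vmat, Matrix.mulVec, dotProduct]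

lemma hPdec (hon : ∀ i j, s i ⬝ᵥ s j = if i = j then (1:ℝ) else 0)
    (hPsym : Pᵀ = P) (hPidem : P * P = P)
    (hPfix : ∀ x : Fin n → ℝ, P *ᵥ x = x ↔ ∀ i, s i ⬝ᵥ x = 0) :
    P = 1 - Vmat s * (Vmat s)ᵀ := by
  have hPx : ∀ x : Fin n → ℝ, P *ᵥ x = x - (Vmat s * (Vmat s)ᵀ) *ᵥ x := by
    intro x
    have key : (Vmat s)ᵀ *ᵥ (x - (Vmat s * (Vmat s)ᵀ) *ᵥ x) = 0 := by
      rw [Matrix.mulVec_sub, Matrix.mulVec_mulVec, ← Matrix.mul_assoc, hVV hon,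
        Matrix.one_mul, sub_self]
    have hfix : P *ᵥ (x - (Vmat s * (Vmat s)ᵀ) *ᵥ x) = x - (Vmat s * (Vmat s)ᵀ) *ᵥ x := by
      apply (hPfix _).mpr
      intro i
      rw [hsdot, key]
      rfl
    calc P *ᵥ x = P *ᵥ ((x - (Vmat s * (Vmat s)ᵀ) *ᵥ x) + (Vmat s * (Vmat s)ᵀ) *ᵥ x) := by
          rw [sub_add_cancel]
      _ = P *ᵥ (x - (Vmat s * (Vmat s)ᵀ) *ᵥ x) + P *ᵥ ((Vmat s * (Vmat s)ᵀ) *ᵥ x) :=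
          Matrix.mulVec_add _ _ _
      _ = (x - (Vmat s * (Vmat s)ᵀ) *ᵥ x) + (P * (Vmat s * (Vmat s)ᵀ)) *ᵥ x := by
          rw [hfix, Matrix.mulVec_mulVec]
      _ = x - (Vmat s * (Vmat s)ᵀ) *ᵥ x := by
          rw [← Matrix.mul_assoc, hPV hPsym hPidem hPfix, Matrix.zero_mul,
            Matrix.zero_mulVec, add_zero]
  ext i j
  have h := congrFun (hPx (Pi.single j 1)) i
  simpa [Matrix.mulVec_single, Matrix.sub_apply, Matrix.one_apply, Pi.single_apply,
    Matrix.mulVec_mulVec] using h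

lemma hTV (hTP : P * T * P = T) (hPV' : P * Vmat s = 0) : T * Vmat s = 0 := by
  rw [← hTP, Matrix.mul_assoc, hPV', Matrix.mul_zero]

lemma hTP' (hPidem : P * P = P) (hTP : P * T * P = T) : T * P = T := by
  conv_lhs => rw [← hTP]
  rw [Matrix.mul_assoc, Matrix.mul_assoc, hPidem, ← Matrix.mul_assoc, hTP]

lemma hPT' (hPidem : P * P = P) (hTP : P * T * P = T) : P * T = T := by
  conv_lhs => rw [← hTP]
  rw [← Matrix.mul_assoc, ← Matrix.mul_assoc, hPidem, hTP]

lemma comm_aux {m : ℕ} (T A Q : Matrix (Fin m) (Fin m) ℝ)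
    (hAP : A * Q = A) (hPA : Q * A = A) (hTsq : T * A * T = Q) : T * A = A * T := by
  have h1 : (T * A) * (T * A) = A := by
    rw [← Matrix.mul_assoc (T * A) T A, hTsq, hPA]
  calc T * A = (T * A) * Q := by rw [Matrix.mul_assoc, hAP]
    _ = (T * A) * (T * A * T) := by rw [hTsq]
    _ = ((T * A) * (T * A)) * T := by
        rw [Matrix.mul_assoc (T * A) (T * A) T]
    _ = A * T := by rw [h1]

lemma hVS (hS : Sᵀ = S) (hSVe : S * Vmat s = Vmat s * Matrix.diagonal μ) :
    (Vmat s)ᵀ * S = Matrix.diagonal μ * (Vmat s)ᵀ := by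
  have h := congrArg Matrix.transpose hSVe
  rw [Matrix.transpose_mul, Matrix.transpose_mul, hS, Matrix.diagonal_transpose] at h
  exact h

-- S = PSP + V D Vᵀ
lemma hSdec (hS : Sᵀ = S)
    (hVV' : (Vmat s)ᵀ * Vmat s = 1)
    (hSVe : S * Vmat s = Vmat s * Matrix.diagonal μ)
    (hPd : P = 1 - Vmat s * (Vmat s)ᵀ) :
    P * S * P = S - Vmat s * Matrix.diagonal μ * (Vmat s)ᵀ := by
  set V := Vmat s
  set D := Matrix.diagonal μ
  have hVS' : Vᵀ * S = D * Vᵀ := hVS hS hSVe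
  rw [hPd]
  rw [Matrix.sub_mul, Matrix.one_mul, Matrix.mul_sub, Matrix.mul_one]
  rw [Matrix.mul_assoc V Vᵀ S, hVS']
  have h2 : (V * (D * Vᵀ)) * (V * Vᵀ) = V * (D * Vᵀ) := by
    rw [Matrix.mul_assoc V (D * Vᵀ) (V * Vᵀ), Matrix.mul_assoc D Vᵀ (V * Vᵀ),
      ← Matrix.mul_assoc Vᵀ V Vᵀ, hVV', Matrix.one_mul]
  have h3 : S * (V * Vᵀ) = V * (D * Vᵀ) := by
    rw [← Matrix.mul_assoc, hSVe, Matrix.mul_assoc]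
  rw [Matrix.sub_mul, h3, h2, sub_self, sub_zero, ← Matrix.mul_assoc V D Vᵀ]

lemma cpx_sub {a b : ℕ} (A B : Matrix (Fin a) (Fin b) ℝ) : cpx (A - B) = cpx A - cpx B := by
  ext i j; simp [cpx]

lemma cmplx_cpx {m : ℕ} (A : Matrix (Fin m) (Fin m) ℝ) : cmplx A = cpx A := rfl

lemma cmplx'_cpx {a b : ℕ} (B : Matrix (Fin a) (Fin b) ℝ) : KreinMatrix.cmplx' B = cpx B := rfl

lemma gram_eq {n k : ℕ} (A : Matrix (Fin n) (Fin n) ℝ) (s : Fin k → Fin n → ℝ) :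
    gramR A s = (Vmat s)ᵀ * A * Vmat s := by
  rw [Matrix.mul_assoc]
  ext i j
  simp [gramR, Vmat, Matrix.mul_apply, Matrix.mulVec, dotProduct]

lemma Bmat_eq {n k : ℕ} (T P R : Matrix (Fin n) (Fin n) ℝ) (s : Fin k → Fin n → ℝ)
    (hTPe : T * P = T) : Bmat T P R s = T * R * Vmat s := by
  ext i j
  show (T *ᵥ (P *ᵥ (R *ᵥ s j))) i = (T * R * Vmat s) i j
  rw [Matrix.mulVec_mulVec, Matrix.mulVec_mulVec, hTPe]
  simp [Vmat, Matrix.mul_apply, Matrix.mulVec, dotProduct]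

end Aux

/-- under the standard Krein-matrix construction, a non-real `z` is an
eigenvalue of the pencil `R - z S` (i.e. `det (R - z S) = 0`) iff `det K(z) = 0`. -/
theorem kreinMatrix_detects_nonreal_eigenvalues (n k : ℕ) (S R : Matrix (Fin n) (Fin n) ℝ)
    (hS : Sᵀ = S) (hSh : S.IsHermitian) (hR : Rᵀ = R) (hSinv : IsUnit S.det)
    (hkneg : Nat.card {i // hSh.eigenvalues i < 0} = k)
    (s : Fin k → Fin n → ℝ) (μ : Fin k → ℝ)
    (hon : ∀ i j, s i ⬝ᵥ s j = if i = j then (1:ℝ) else 0)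
    (heig : ∀ i, S.mulVec (s i) = μ i • s i) (hμ : ∀ i, μ i < 0)
    (P : Matrix (Fin n) (Fin n) ℝ) (hPsym : Pᵀ = P) (hPidem : P * P = P)
    (hPfix : ∀ x : Fin n → ℝ, P.mulVec x = x ↔ ∀ i, s i ⬝ᵥ x = 0)
    (T : Matrix (Fin n) (Fin n) ℝ) (hT : Tᵀ = T) (hTP : P * T * P = T)
    (hTsq : T * (P * S * P) * T = P)
    (hTpos : ∀ x : Fin n → ℝ, P.mulVec x = x → x ≠ 0 → 0 < x ⬝ᵥ T.mulVec x) :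
    ∀ z : ℂ, z.im ≠ 0 →
      (((cmplx R) - z • (cmplx S)).det = 0 ↔ (KreinMatrix R S P T s z).det = 0) := by
  intro z hz
  classical
  -- real identities
  set V : Matrix (Fin n) (Fin k) ℝ := Vmat s with hVdef
  have rVV : Vᵀ * V = 1 := hVV hon
  have rSV : S * V = V * Matrix.diagonal μ := hSV heig
  have rPV : P * V = 0 := hPV hPsym hPidem hPfix
  have rPd : P = 1 - V * Vᵀ := hPdec hon hPsym hPidem hPfix
  have rTV : T * V = 0 := hTV hTP rPV
  have rTP : T * P = T := hTP' hPidem hTP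
  have rPT : P * T = T := hPT' hPidem hTP
  have rVT : Vᵀ * T = 0 := by
    have h := congrArg Matrix.transpose rTV
    rw [Matrix.transpose_mul, hT] at h
    simpa using h
  have rVP : Vᵀ * P = 0 := by
    have h := congrArg Matrix.transpose rPV
    rw [Matrix.transpose_mul, hPsym] at h
    simpa using h
  have rVS : Vᵀ * S = Matrix.diagonal μ * Vᵀ := hVS hS rSV
  have rSd : P * S * P = S - V * Matrix.diagonal μ * Vᵀ := hSdec hS rVV rSV rPd
  have rcomm : T * (P * S * P) = (P * S * P) * T := by
    apply comm_aux T (P * S * P) P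
    · rw [Matrix.mul_assoc (P * S) P P, hPidem]
    · rw [← Matrix.mul_assoc, ← Matrix.mul_assoc, hPidem]
    · exact hTsq
  have rTSA : T * S = T * (P * S * P) := by
    rw [rSd, Matrix.mul_sub]
    have h0 : T * (V * Matrix.diagonal μ * Vᵀ) = 0 := by
      rw [← Matrix.mul_assoc, ← Matrix.mul_assoc, rTV, Matrix.zero_mul, Matrix.zero_mul]
    rw [h0, sub_zero]
  have r9 : T * (T * S) = P := by
    rw [rTSA, rcomm, ← Matrix.mul_assoc, hTsq]
  have r10 : (T * S) * T = P := by rw [rTSA]; exact hTsq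
  have r11 : (T * S) * V = 0 := by
    rw [Matrix.mul_assoc, rSV, ← Matrix.mul_assoc, rTV, Matrix.zero_mul]
  have r12 : gramR R s = Vᵀ * R * V := gram_eq R s
  have r13 : gramR S s = Vᵀ * S * V := gram_eq S s
  have r14 : Bmat T P R s = T * R * V := Bmat_eq T P R s rTP
  -- complexify
  set W : Matrix (Fin n) (Fin k) ℂ := cpx V with hWdef
  set Rc : Matrix (Fin n) (Fin n) ℂ := cpx R with hRcdef
  set Sc : Matrix (Fin n) (Fin n) ℂ := cpx S with hScdef
  set Tc : Matrix (Fin n) (Fin n) ℂ := cpx T with hTcdef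
  set Pc : Matrix (Fin n) (Fin n) ℂ := cpx P with hPcdef
  set Dc : Matrix (Fin k) (Fin k) ℂ := cpx (Matrix.diagonal μ) with hDcdef
  have cW : Wᵀ * W = 1 := by
    rw [hWdef, ← cpx_transpose, ← cpx_mul, rVV, cpx_one]
  have cSV : Sc * W = W * Dc := by rw [← cpx_mul, ← cpx_mul, rSV]
  have cVS : Wᵀ * Sc = Dc * Wᵀ := by
    rw [hWdef, ← cpx_transpose, ← cpx_mul, ← cpx_mul, rVS]
  have cPd : Pc = 1 - W * Wᵀ := by
    rw [hWdef, ← cpx_transpose, ← cpx_mul, ← cpx_one (a := n), ← cpx_sub, ← rPd]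
  have cTV : Tc * W = 0 := by rw [← cpx_mul, rTV, cpx_zero]
  have cVT : Wᵀ * Tc = 0 := by
    rw [hWdef, ← cpx_transpose, ← cpx_mul, rVT, cpx_zero]
  have cVP : Wᵀ * Pc = 0 := by
    rw [hWdef, ← cpx_transpose, ← cpx_mul, rVP, cpx_zero]
  have cTP : Tc * Pc = Tc := by rw [← cpx_mul, rTP]
  have cPT : Pc * Tc = Tc := by rw [← cpx_mul, rPT]
  have c9 : Tc * (Tc * Sc) = Pc := by rw [← cpx_mul, ← cpx_mul, r9]
  have c10 : (Tc * Sc) * Tc = Pc := by rw [← cpx_mul, ← cpx_mul, r10]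
  have c11 : (Tc * Sc) * W = 0 := by rw [← cpx_mul, ← cpx_mul, r11, cpx_zero]
  have cTRT : cmplx (T * R * T) = Tc * Rc * Tc := by
    rw [cmplx_cpx, cpx_mul, cpx_mul]
  set G : Matrix (Fin n) (Fin n) ℂ := Tc * Rc * Tc - z • 1 with hGdef
  have hG : IsUnit G.det := by
    have hsym : (T * R * T)ᵀ = T * R * T := by
      rw [Matrix.transpose_mul, Matrix.transpose_mul, hT, hR, ← Matrix.mul_assoc]
    have h := herm_unit (T * R * T) hsym z hz
    rw [cmplx_cpx] at cTRT
    rw [hGdef, ← cTRT]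
    exact h
  have hWWc : W * Wᵀ = 1 - Pc := by rw [cPd, sub_sub_cancel]
  -- the Krein matrix in terms of W
  have hBH : (cpx (T * R * V))ᴴ = Wᵀ * (Rc * Tc) := by
    rw [cpx_conjTranspose, Matrix.transpose_mul, Matrix.transpose_mul, hR, hT,
      cpx_mul, cpx_mul, hWdef, cpx_transpose]
  have hKform : KreinMatrix R S P T s z =
      Wᵀ * Rc * W - z • (Wᵀ * Sc * W) - Wᵀ * (Rc * Tc) * G⁻¹ * (Tc * Rc * W) := by
    show cmplx (gramR R s) - z • cmplx (gramR S s) -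
        (KreinMatrix.cmplx' (Bmat T P R s))ᴴ * ((cmplx (T * R * T)) - z • 1)⁻¹ *
          KreinMatrix.cmplx' (Bmat T P R s) = _
    rw [r12, r13, r14, cmplx_cpx, cmplx_cpx, cmplx'_cpx, cTRT, hBH, ← hGdef]
    simp only [cpx_mul, cpx_transpose, ← hWdef, ← hRcdef, ← hScdef, ← hTcdef]
  -- key matrix identities over ℂ
  have e1 : (Tc * Rc * Tc) * (Tc * Sc) = (Tc * Rc) * Pc := by
    rw [Matrix.mul_assoc (Tc * Rc) Tc (Tc * Sc), c9]
  have I1 : G * (Tc * Sc) + (Tc * Rc * W) * Wᵀ = Tc * (Rc - z • Sc) := by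
    rw [hGdef, Matrix.sub_mul, Matrix.smul_mul, Matrix.one_mul, e1,
      Matrix.mul_assoc (Tc * Rc) W Wᵀ, hWWc, Matrix.mul_sub (Tc * Rc), Matrix.mul_one,
      Matrix.mul_sub Tc, Matrix.mul_smul]
    abel
  have e3 : (Wᵀ * (Rc * Tc)) * (Tc * Sc) = (Wᵀ * Rc) * Pc := by
    rw [Matrix.mul_assoc Wᵀ (Rc * Tc) (Tc * Sc), Matrix.mul_assoc Rc Tc (Tc * Sc), c9, ← Matrix.mul_assoc Wᵀ Rc Pc]
  have e5 : (Wᵀ * Sc * W) * Wᵀ = Wᵀ * Sc := by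
    rw [Matrix.mul_assoc (Wᵀ * Sc) W Wᵀ, hWWc, Matrix.mul_sub, Matrix.mul_one, cVS,
      Matrix.mul_assoc Dc Wᵀ Pc, cVP, Matrix.mul_zero, sub_zero]
  have I2 : (Wᵀ * (Rc * Tc)) * (Tc * Sc) + (Wᵀ * Rc * W) * Wᵀ - z • ((Wᵀ * Sc * W) * Wᵀ)
      = Wᵀ * (Rc - z • Sc) := by
    rw [e3, e5, Matrix.mul_assoc (Wᵀ * Rc) W Wᵀ, hWWc, Matrix.mul_sub (Wᵀ * Rc),
      Matrix.mul_one, Matrix.mul_sub Wᵀ, Matrix.mul_smul]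
    abel
  -- reduce to kernels
  rw [hKform, cmplx_cpx, cmplx_cpx, ← hRcdef, ← hScdef,
    ← Matrix.exists_mulVec_eq_zero_iff, ← Matrix.exists_mulVec_eq_zero_iff]
  constructor
  · rintro ⟨x, hx0, hxker⟩
    obtain ⟨u, hu⟩ : ∃ u, u = (Tc * Sc) *ᵥ x := ⟨_, rfl⟩
    obtain ⟨c, hc⟩ : ∃ c, c = Wᵀ *ᵥ x := ⟨_, rfl⟩
    have f1 : G *ᵥ u + (Tc * Rc * W) *ᵥ c = 0 := by
      rw [hu, hc, Matrix.mulVec_mulVec, Matrix.mulVec_mulVec, ← Matrix.add_mulVec, I1,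
        ← Matrix.mulVec_mulVec, hxker, Matrix.mulVec_zero]
    have f2 : Tc *ᵥ u = Pc *ᵥ x := by rw [hu, Matrix.mulVec_mulVec, c9]
    have f3 : x = Tc *ᵥ u + W *ᵥ c := by
      rw [f2, hc, Matrix.mulVec_mulVec, ← Matrix.add_mulVec, cPd, sub_add_cancel,
        Matrix.one_mulVec]
    refine ⟨c, ?_, ?_⟩
    · intro hc0
      have hGu : G *ᵥ u = 0 := by
        rw [hc0, Matrix.mulVec_zero, add_zero] at f1
        exact f1
      have hu0 : u = 0 := by
        calc u = (G⁻¹ * G) *ᵥ u := by rw [Matrix.nonsing_inv_mul _ hG, Matrix.one_mulVec]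
          _ = G⁻¹ *ᵥ (G *ᵥ u) := by rw [Matrix.mulVec_mulVec]
          _ = 0 := by rw [hGu, Matrix.mulVec_zero]
      rw [f3, hu0, hc0, Matrix.mulVec_zero, Matrix.mulVec_zero, add_zero] at hx0
      exact hx0 rfl
    · have hBc : (Tc * Rc * W) *ᵥ c = -(G *ᵥ u) := by
        rw [eq_neg_iff_add_eq_zero, add_comm]
        exact f1
      have hGinvB : G⁻¹ *ᵥ ((Tc * Rc * W) *ᵥ c) = -u := by
        rw [hBc, Matrix.mulVec_neg, Matrix.mulVec_mulVec, Matrix.nonsing_inv_mul _ hG,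
          Matrix.one_mulVec]
      have hI2x : (Wᵀ * (Rc * Tc)) *ᵥ u + ((Wᵀ * Rc * W) *ᵥ c - z • ((Wᵀ * Sc * W) *ᵥ c))
          = 0 := by
        have h := congrArg (fun M => M *ᵥ x) I2
        simp only [Matrix.add_mulVec, Matrix.sub_mulVec, Matrix.smul_mulVec] at h
        rw [← Matrix.mulVec_mulVec (v := x) (M := Wᵀ * (Rc * Tc)) (N := Tc * Sc), ← hu,
          ← Matrix.mulVec_mulVec (v := x) (M := Wᵀ * Rc * W) (N := Wᵀ), ← hc,
          ← Matrix.mulVec_mulVec (v := x) (M := Wᵀ * Sc * W) (N := Wᵀ), ← hc,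
          ← Matrix.mulVec_mulVec (v := x) (M := Wᵀ) (N := Rc - z • Sc), hxker,
          Matrix.mulVec_zero] at h
        rw [add_sub_assoc] at h
        exact h
      rw [Matrix.sub_mulVec, Matrix.sub_mulVec, Matrix.smul_mulVec,
        ← Matrix.mulVec_mulVec (M := Wᵀ * (Rc * Tc) * G⁻¹) (N := Tc * Rc * W),
        ← Matrix.mulVec_mulVec (M := Wᵀ * (Rc * Tc)) (N := G⁻¹), hGinvB,
        Matrix.mulVec_neg, sub_neg_eq_add, ← hI2x]
      abel
  · rintro ⟨c, hc0, hcker⟩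
    obtain ⟨u, hu⟩ : ∃ u, u = -(G⁻¹ *ᵥ ((Tc * Rc * W) *ᵥ c)) := ⟨_, rfl⟩
    obtain ⟨x, hx⟩ : ∃ x, x = Tc *ᵥ u + W *ᵥ c := ⟨_, rfl⟩
    have hPG : Pc * G = G * Pc := by
      have h1 : Pc * (Tc * Rc * Tc) = Tc * Rc * Tc := by
        rw [← Matrix.mul_assoc, ← Matrix.mul_assoc, cPT]
      have h2 : (Tc * Rc * Tc) * Pc = Tc * Rc * Tc := by
        rw [Matrix.mul_assoc, cTP]
      rw [hGdef, Matrix.mul_sub, Matrix.sub_mul, Matrix.mul_smul, Matrix.smul_mul,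
        Matrix.mul_one, Matrix.one_mul, h1, h2]
    have hPGinv : Pc * G⁻¹ = G⁻¹ * Pc := by
      calc Pc * G⁻¹ = (G⁻¹ * G) * (Pc * G⁻¹) := by
            rw [Matrix.nonsing_inv_mul _ hG, Matrix.one_mul]
        _ = G⁻¹ * ((G * Pc) * G⁻¹) := by
            rw [Matrix.mul_assoc, Matrix.mul_assoc]
        _ = G⁻¹ * ((Pc * G) * G⁻¹) := by rw [hPG]
        _ = G⁻¹ * (Pc * (G * G⁻¹)) := by rw [Matrix.mul_assoc]
        _ = G⁻¹ * Pc := by rw [Matrix.mul_nonsing_inv _ hG, Matrix.mul_one]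
    have hPB : Pc * (Tc * Rc * W) = Tc * Rc * W := by
      rw [← Matrix.mul_assoc, ← Matrix.mul_assoc, cPT]
    have g1 : Pc *ᵥ u = u := by
      rw [hu, Matrix.mulVec_neg, neg_inj, Matrix.mulVec_mulVec, hPGinv,
        ← Matrix.mulVec_mulVec (M := G⁻¹) (N := Pc),
        Matrix.mulVec_mulVec (v := c) (M := Pc) (N := Tc * Rc * W), hPB]
    have g4 : G *ᵥ u + (Tc * Rc * W) *ᵥ c = 0 := by
      rw [hu, Matrix.mulVec_neg, Matrix.mulVec_mulVec, Matrix.mul_nonsing_inv _ hG,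
        Matrix.one_mulVec, neg_add_cancel]
    have g2 : (Tc * Sc) *ᵥ x = u := by
      rw [hx, Matrix.mulVec_add, Matrix.mulVec_mulVec, Matrix.mulVec_mulVec, c10, c11,
        Matrix.zero_mulVec, add_zero]
      exact g1
    have g3 : Wᵀ *ᵥ x = c := by
      rw [hx, Matrix.mulVec_add, Matrix.mulVec_mulVec, Matrix.mulVec_mulVec, cVT, cW,
        Matrix.zero_mulVec, Matrix.one_mulVec, zero_add]
    refine ⟨x, ?_, ?_⟩
    · intro hx0
      rw [hx0, Matrix.mulVec_zero] at g3
      exact hc0 g3.symm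
    · -- (Rc - z•Sc) *ᵥ x = 0
      obtain ⟨w, hw⟩ : ∃ w, w = (Rc - z • Sc) *ᵥ x := ⟨_, rfl⟩
      rw [← hw]
      have gT : Tc *ᵥ w = 0 := by
        rw [hw, Matrix.mulVec_mulVec, ← I1, Matrix.add_mulVec,
          ← Matrix.mulVec_mulVec (M := G) (N := Tc * Sc), g2,
          ← Matrix.mulVec_mulVec (M := Tc * Rc * W) (N := Wᵀ), g3]
        exact g4
      have gV : Wᵀ *ᵥ w = 0 := by
        rw [hw, Matrix.mulVec_mulVec, ← I2, Matrix.sub_mulVec, Matrix.add_mulVec,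
          Matrix.smul_mulVec,
          ← Matrix.mulVec_mulVec (M := Wᵀ * (Rc * Tc)) (N := Tc * Sc), g2,
          ← Matrix.mulVec_mulVec (M := Wᵀ * Rc * W) (N := Wᵀ), g3,
          ← Matrix.mulVec_mulVec (M := Wᵀ * Sc * W) (N := Wᵀ), g3]
        -- now: Wᵀ*(Rc*Tc) *ᵥ u + (Wᵀ*Rc*W)*ᵥc - z•((Wᵀ*Sc*W)*ᵥc) = 0
        have hKc := hcker
        rw [Matrix.sub_mulVec, Matrix.sub_mulVec, Matrix.smul_mulVec,
          ← Matrix.mulVec_mulVec (M := Wᵀ * (Rc * Tc) * G⁻¹) (N := Tc * Rc * W),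
          ← Matrix.mulVec_mulVec (M := Wᵀ * (Rc * Tc)) (N := G⁻¹), ← neg_neg
            (G⁻¹ *ᵥ ((Tc * Rc * W) *ᵥ c)), ← hu, Matrix.mulVec_neg, sub_neg_eq_add] at hKc
        rw [← hKc]
        abel
      -- conclude w = 0
      have : w = Pc *ᵥ w + W *ᵥ (Wᵀ *ᵥ w) := by
        rw [Matrix.mulVec_mulVec, ← Matrix.add_mulVec, cPd, sub_add_cancel,
          Matrix.one_mulVec]
      rw [gV, Matrix.mulVec_zero, add_zero] at this
      rw [this, ← c10, ← Matrix.mulVec_mulVec, gT, Matrix.mulVec_zero]
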